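/- With P, A, B as in the noncommutative sphere example (Δ_R(xⱼ) = xⱼ ⊗ (1 − 2δ), Σᵢ aᵢxᵢ² = r², P = B ⊕ Σⱼ B·xⱼ), the canonical map T_B : P ⊗_B P → P ⊗ A, p ⊗_B q ↦ p q₍₀₎ ⊗ q₍₁₎, is bijective, with inverse the unique left P-module map sending 1 ⊗ 1 ↦ 1 ⊗_B 1 and 1 ⊗ δ ↦ ½(1 ⊗_B 1 − r⁻² Σᵢ aᵢ xᵢ ⊗_B xᵢ). -/

import Mathlib

open TensorProduct

/-- The Hopf algebra `A = Map(ℤ/2, ℂ)` of functions on `ℤ/2` (as an algebra). -/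
abbrev MapZ2 : Type := ZMod 2 → ℂ

/-- `δ ∈ A`: the indicator function of the nontrivial element of `ℤ/2`. -/
noncomputable def deltaFn : MapZ2 := fun z => if z = 1 then 1 else 0

/-- The canonical map `T_R : P ⊗ P → P ⊗ A`, `p ⊗ q ↦ p·q₍₀₎ ⊗ q₍₁₎`. -/
noncomputable def TRmap {P : Type*} [Ring P] [Algebra ℂ P]
    (ΔR : P →ₐ[ℂ] P ⊗[ℂ] MapZ2) : P ⊗[ℂ] P →ₗ[ℂ] P ⊗[ℂ] MapZ2 :=
  (LinearMap.rTensor MapZ2 (LinearMap.mul' ℂ P)) ∘ₗ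
    (TensorProduct.assoc ℂ P P MapZ2).symm.toLinearMap ∘ₗ
      (LinearMap.lTensor P ΔR.toLinearMap)

/-- The balancing relations over the coinvariants `B = P^{co A}`, so that
`P ⊗_B P = (P ⊗ P)/K`. -/
def balK {P : Type*} [Ring P] [Algebra ℂ P]
    (ΔR : P →ₐ[ℂ] P ⊗[ℂ] MapZ2) : Submodule ℂ (P ⊗[ℂ] P) :=
  Submodule.span ℂ {y : P ⊗[ℂ] P | ∃ (p q b : P), ΔR b = b ⊗ₜ[ℂ] (1 : MapZ2) ∧
    y = (p * b) ⊗ₜ[ℂ] q - p ⊗ₜ[ℂ] (b * q)}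

/-- The "even part" `B`: the span of products of even numbers of the
generators. -/
def evenPart {P : Type*} [Ring P] [Algebra ℂ P] (x : Fin 3 → P) :
    Submodule ℂ P :=
  Submodule.span ℂ {p : P | ∃ L : List (Fin 3), Even L.length ∧ p = (L.map x).prod}

theorem TRmap_tmul {P : Type*} [Ring P] [Algebra ℂ P]
    (ΔR : P →ₐ[ℂ] P ⊗[ℂ] MapZ2) (p q q' : P) (g : MapZ2)
    (h : ΔR q = q' ⊗ₜ[ℂ] g) :
    TRmap ΔR (p ⊗ₜ[ℂ] q) = (p * q') ⊗ₜ[ℂ] g := by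
  simp [TRmap, h]

noncomputable def mMap {P : Type*} [Ring P] [Algebra ℂ P]
    (ΔR : P →ₐ[ℂ] P ⊗[ℂ] MapZ2) : P →ₗ[ℂ] ((P ⊗[ℂ] P) ⧸ balK ΔR) :=
  (balK ΔR).mkQ ∘ₗ ((TensorProduct.mk ℂ P P).flip 1)

noncomputable def sMap {P : Type*} [Ring P] [Algebra ℂ P] (x : Fin 3 → P)
    (a : Fin 3 → ℝ) (r : ℝ) (ΔR : P →ₐ[ℂ] P ⊗[ℂ] MapZ2) :
    P →ₗ[ℂ] ((P ⊗[ℂ] P) ⧸ balK ΔR) :=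
  ((r : ℂ)^2)⁻¹ • ∑ i, (a i : ℂ) •
    ((balK ΔR).mkQ ∘ₗ ((TensorProduct.mk ℂ P P).flip (x i)) ∘ₗ
      LinearMap.mulRight ℂ (x i))

theorem mMap_apply {P : Type*} [Ring P] [Algebra ℂ P]
    (ΔR : P →ₐ[ℂ] P ⊗[ℂ] MapZ2) (p : P) :
    mMap ΔR p = (balK ΔR).mkQ (p ⊗ₜ[ℂ] 1) := rfl

theorem sMap_apply {P : Type*} [Ring P] [Algebra ℂ P] (x : Fin 3 → P)
    (a : Fin 3 → ℝ) (r : ℝ) (ΔR : P →ₐ[ℂ] P ⊗[ℂ] MapZ2) (p : P) :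
    sMap x a r ΔR p = ((r : ℂ)^2)⁻¹ •
      ∑ i, (a i : ℂ) • (balK ΔR).mkQ ((p * x i) ⊗ₜ[ℂ] (x i)) := by
  simp only [sMap, LinearMap.smul_apply, LinearMap.coe_sum, Finset.sum_apply,
    LinearMap.coe_comp, Function.comp_apply, LinearMap.mulRight_apply,
    LinearMap.flip_apply, TensorProduct.mk_apply]

noncomputable def sphereF {P : Type*} [Ring P] [Algebra ℂ P] (x : Fin 3 → P)
    (a : Fin 3 → ℝ) (r : ℝ) (ΔR : P →ₐ[ℂ] P ⊗[ℂ] MapZ2) :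
    (P ⊗[ℂ] MapZ2) →ₗ[ℂ] ((P ⊗[ℂ] P) ⧸ balK ΔR) :=
  TensorProduct.lift (LinearMap.mk₂ ℂ
    (fun p g => g 0 • ((1/2:ℂ) • (mMap ΔR p + sMap x a r ΔR p)) +
      g 1 • ((1/2:ℂ) • (mMap ΔR p - sMap x a r ΔR p)))
    (by intro p p' g; simp only [map_add]; module)
    (by intro c p g; simp only [map_smul]; module)
    (by intro p g g'; simp only [Pi.add_apply]; module)
    (by intro c p g; simp only [Pi.smul_apply, smul_eq_mul]; module))

theorem sphereF_tmul {P : Type*} [Ring P] [Algebra ℂ P] (x : Fin 3 → P)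
    (a : Fin 3 → ℝ) (r : ℝ) (ΔR : P →ₐ[ℂ] P ⊗[ℂ] MapZ2) (p : P) (g : MapZ2) :
    sphereF x a r ΔR (p ⊗ₜ[ℂ] g) =
      g 0 • ((1/2:ℂ) • (mMap ΔR p + sMap x a r ΔR p)) +
      g 1 • ((1/2:ℂ) • (mMap ΔR p - sMap x a r ΔR p)) := rfl

/-- for the noncommutative sphere bundle, the canonical Galois map
`T_B : P ⊗_B P → P ⊗ A` is bijective, with inverse the (unique) left `P`-module
map sending `1 ⊗ 1 ↦ 1 ⊗_B 1` and
`1 ⊗ δ ↦ ½(1 ⊗_B 1 − r⁻² Σᵢ aᵢ xᵢ ⊗_B xᵢ)`. -/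
theorem stmt13 {P : Type*} [Ring P] [Algebra ℂ P]
    (x : Fin 3 → P) (a : Fin 3 → ℝ) (r : ℝ)
    (ha : ∀ j, 0 < a j) (hr : 0 < r)
    (hsphere : ∑ j, ((a j : ℂ)) • (x j) ^ 2 = algebraMap ℂ P ((r : ℂ) ^ 2))
    (ΔR : P →ₐ[ℂ] P ⊗[ℂ] MapZ2)
    (hΔ : ∀ j, ΔR (x j) = (x j) ⊗ₜ[ℂ] (1 - 2 * deltaFn))
    (hdec : ∀ p : P, ∃ b : Fin 4 → P, (∀ i, b i ∈ evenPart x) ∧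
      p = b 0 + ∑ j : Fin 3, b j.succ * x j)
    (heven : ∀ p : P, p ∈ evenPart x → ΔR p = p ⊗ₜ[ℂ] (1 : MapZ2))
    (TB : ((P ⊗[ℂ] P) ⧸ (balK ΔR)) →ₗ[ℂ] P ⊗[ℂ] MapZ2)
    (hTB : ∀ y : P ⊗[ℂ] P, TB ((balK ΔR).mkQ y) = TRmap ΔR y) :
    Function.Bijective TB ∧
      ∃ F : (P ⊗[ℂ] MapZ2) →ₗ[ℂ] ((P ⊗[ℂ] P) ⧸ (balK ΔR)),
        (∀ z, F (TB z) = z) ∧ (∀ y, TB (F y) = y) ∧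
        (∀ p : P, F (p ⊗ₜ[ℂ] (1 : MapZ2)) = (balK ΔR).mkQ (p ⊗ₜ[ℂ] (1 : P))) ∧
        (∀ p : P, F (p ⊗ₜ[ℂ] deltaFn) =
          (balK ΔR).mkQ ((1/2 : ℂ) • (p ⊗ₜ[ℂ] (1 : P) -
            ((r : ℂ) ^ 2)⁻¹ • ∑ i, ((a i : ℂ) • (p * x i)) ⊗ₜ[ℂ] (x i)))) := by
  classical
  have hr2 : ((r : ℂ) ^ 2) ≠ 0 := by
    have : (r : ℂ) ≠ 0 := by exact_mod_cast hr.ne'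
    exact pow_ne_zero 2 this
  -- MapZ2 evaluation facts
  have hw0 : ((1 : MapZ2) - 2 * deltaFn) 0 = 1 := by simp [deltaFn]
  have hw1 : ((1 : MapZ2) - 2 * deltaFn) 1 = -1 := by simp [deltaFn]; norm_num
  have hd0 : deltaFn 0 = 0 := by simp [deltaFn]
  have hd1 : deltaFn 1 = 1 := by simp [deltaFn]
  have hw2 : ((1 : MapZ2) - 2 * deltaFn) * ((1 : MapZ2) - 2 * deltaFn) = 1 := by
    ext z; rcases (by decide : ∀ z : ZMod 2, z = 0 ∨ z = 1) z with rfl | rfl <;> simp [deltaFn] <;> ring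
  have gdecomp : ∀ g : MapZ2,
      g 0 • ((1/2 : ℂ) • ((1 : MapZ2) + (1 - 2 * deltaFn))) +
        g 1 • ((1/2 : ℂ) • ((1 : MapZ2) - (1 - 2 * deltaFn))) = g := by
    intro g; ext z; rcases (by decide : ∀ z : ZMod 2, z = 0 ∨ z = 1) z with rfl | rfl <;> simp [deltaFn] <;> ring
  -- coaction facts
  have hΔ1 : ΔR 1 = (1 : P) ⊗ₜ[ℂ] (1 : MapZ2) := by
    rw [map_one, Algebra.TensorProduct.one_def]
  have hΔxx : ∀ j i, ΔR (x j * x i) = (x j * x i) ⊗ₜ[ℂ] (1 : MapZ2) := by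
    intro j i
    rw [map_mul, hΔ, hΔ, Algebra.TensorProduct.tmul_mul_tmul, hw2]
  -- balancing in the quotient
  have hbal : ∀ p q b : P, ΔR b = b ⊗ₜ[ℂ] (1 : MapZ2) →
      (balK ΔR).mkQ ((p * b) ⊗ₜ[ℂ] q) = (balK ΔR).mkQ (p ⊗ₜ[ℂ] (b * q)) := by
    intro p q b hb
    rw [Submodule.mkQ_apply, Submodule.mkQ_apply, Submodule.Quotient.eq]
    exact Submodule.subset_span ⟨p, q, b, hb, rfl⟩
  -- sphere relation
  have hkey : ∀ q : P, ((r : ℂ) ^ 2)⁻¹ • ∑ i, (a i : ℂ) • (q * x i * x i) = q := by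
    intro q
    have h1 : ∑ i, (a i : ℂ) • (q * x i * x i) = q * ∑ i, (a i : ℂ) • (x i) ^ 2 := by
      rw [Finset.mul_sum]
      refine Finset.sum_congr rfl fun i _ => ?_
      rw [mul_smul_comm, sq, mul_assoc]
    rw [h1, hsphere, ← Algebra.commutes, ← Algebra.smul_def, smul_smul,
      inv_mul_cancel₀ hr2, one_smul]
  -- values of TB on the building blocks
  have hTBm : ∀ p : P, TB (mMap ΔR p) = p ⊗ₜ[ℂ] (1 : MapZ2) := by
    intro p
    rw [mMap_apply, hTB, TRmap_tmul ΔR p 1 1 1 hΔ1, mul_one]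
  have hTBs : ∀ p : P,
      TB (sMap x a r ΔR p) = p ⊗ₜ[ℂ] ((1 : MapZ2) - 2 * deltaFn) := by
    intro p
    rw [sMap_apply, map_smul, map_sum]
    rw [Finset.sum_congr rfl (fun i _ => by
      rw [map_smul, hTB, TRmap_tmul ΔR (p * x i) (x i) (x i) _ (hΔ i)])]
    simp only [smul_tmul']
    rw [← sum_tmul, smul_tmul', hkey p]
  -- values of F on the building blocks
  have hF1 : ∀ q' : P, sphereF x a r ΔR (q' ⊗ₜ[ℂ] (1 : MapZ2)) = mMap ΔR q' := by
    intro q'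
    rw [sphereF_tmul]
    simp only [Pi.one_apply, one_smul]
    module
  have hFw : ∀ q' : P,
      sphereF x a r ΔR (q' ⊗ₜ[ℂ] ((1 : MapZ2) - 2 * deltaFn)) = sMap x a r ΔR q' := by
    intro q'
    rw [sphereF_tmul, hw0, hw1]
    module
  have hFd : ∀ p : P, sphereF x a r ΔR (p ⊗ₜ[ℂ] deltaFn) =
      (1/2 : ℂ) • (mMap ΔR p - sMap x a r ΔR p) := by
    intro p
    rw [sphereF_tmul, hd0, hd1, zero_smul, one_smul, zero_add]
  -- TB ∘ F = id
  have hTF : ∀ y : P ⊗[ℂ] MapZ2, TB (sphereF x a r ΔR y) = y := by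
    intro y
    induction y with
    | zero => simp
    | add y₁ y₂ ih₁ ih₂ => rw [map_add, map_add, ih₁, ih₂]
    | tmul p g =>
      rw [sphereF_tmul]
      simp only [map_add, map_smul, map_sub, hTBm, hTBs]
      rw [← tmul_add, ← tmul_sub, ← tmul_smul, ← tmul_smul, ← tmul_smul, ← tmul_smul,
        ← tmul_add, gdecomp g]
  -- F ∘ TB = id
  have hFT : ∀ y : P ⊗[ℂ] P,
      sphereF x a r ΔR (TRmap ΔR y) = (balK ΔR).mkQ y := by
    intro y
    induction y with
    | zero => simp
    | add y₁ y₂ ih₁ ih₂ => rw [map_add, map_add, ih₁, ih₂, map_add]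
    | tmul p q =>
      obtain ⟨b, hbmem, hq⟩ := hdec q
      have hΔbx : ∀ j : Fin 3, ΔR (b j.succ * x j) =
          (b j.succ * x j) ⊗ₜ[ℂ] ((1 : MapZ2) - 2 * deltaFn) := by
        intro j
        rw [map_mul, heven _ (hbmem j.succ), hΔ, Algebra.TensorProduct.tmul_mul_tmul,
          one_mul]
      have hsb : ∀ j : Fin 3, sMap x a r ΔR (p * (b j.succ * x j)) =
          (balK ΔR).mkQ (p ⊗ₜ[ℂ] (b j.succ * x j)) := by
        intro j
        rw [sMap_apply]
        have e1 : ∀ i : Fin 3,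
            (balK ΔR).mkQ ((p * (b j.succ * x j) * x i) ⊗ₜ[ℂ] x i) =
            (balK ΔR).mkQ (p ⊗ₜ[ℂ] (b j.succ * x j * x i * x i)) := by
          intro i
          have hco : ΔR (b j.succ * (x j * x i)) =
              (b j.succ * (x j * x i)) ⊗ₜ[ℂ] (1 : MapZ2) := by
            rw [map_mul, heven _ (hbmem j.succ), hΔxx,
              Algebra.TensorProduct.tmul_mul_tmul, one_mul]
          have h2 := hbal p (x i) (b j.succ * (x j * x i)) hco
          have e2 : p * (b j.succ * (x j * x i)) = p * (b j.succ * x j) * x i := by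
            noncomm_ring
          have e3 : b j.succ * (x j * x i) * x i = b j.succ * x j * x i * x i := by
            noncomm_ring
          rw [e2, e3] at h2
          exact h2
        rw [Finset.sum_congr rfl (fun i _ => by rw [e1 i])]
        simp only [← map_smul, ← map_sum, ← tmul_smul, ← tmul_sum]
        rw [hkey (b j.succ * x j)]
      rw [hq, tmul_add, tmul_sum]
      simp only [map_add, map_sum]
      congr 1
      · rw [TRmap_tmul ΔR p (b 0) (b 0) 1 (heven _ (hbmem 0)), hF1, mMap_apply,
          hbal p 1 (b 0) (heven _ (hbmem 0)), mul_one]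
      · exact Finset.sum_congr rfl fun j _ => by
          rw [TRmap_tmul ΔR p _ _ _ (hΔbx j), hFw, hsb j]
  refine ⟨Function.bijective_iff_has_inverse.mpr ⟨sphereF x a r ΔR, ?_, ?_⟩,
    sphereF x a r ΔR, ?_, hTF, ?_, ?_⟩
  · intro z
    obtain ⟨y, rfl⟩ := Submodule.mkQ_surjective _ z
    rw [hTB, hFT]
  · exact hTF
  · intro z
    obtain ⟨y, rfl⟩ := Submodule.mkQ_surjective _ z
    rw [hTB, hFT]
  · intro p
    rw [hF1, mMap_apply]
  · intro p
    rw [hFd p]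
    simp only [mMap_apply, sMap_apply, map_smul, map_sub, map_sum, ← smul_tmul']
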